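/- Let X be a nonempty set with a generic binary relation ⊥. Then the semi-simplicial set X_•^⊥ is boundedly acyclic and connected: the cochain complex 0 → ℓ^∞(X_0^⊥) → ℓ^∞(X_1^⊥) → ℓ^∞(X_2^⊥) → ⋯ with the alternating-sum coboundary maps has cohomology equal to ℝ in degree 0 and 0 in all positive degrees. -/

import Mathlib

/-- A real-valued function is bounded. -/
def IsBddFun {α : Type*} (f : α → ℝ) : Prop := ∃ C : ℝ, ∀ x, |f x| ≤ C

/-- Tuples pairwise related by `r` in increasing index order. -/
def PairwiseRel {X : Type*} (r : X → X → Prop) {m : ℕ} (f : Fin m → X) : Prop :=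
  ∀ i j : Fin m, i < j → r (f i) (f j)

/-- The set `X_n^⊥` of `(n+1)`-tuples pairwise related by `r`. -/
def Splx {X : Type*} (r : X → X → Prop) (n : ℕ) : Type _ :=
  { f : Fin (n + 1) → X // PairwiseRel r f }

/-- Faces of a simplex. -/
def Splx.face {X : Type*} {r : X → X → Prop} {n : ℕ} (i : Fin (n + 2))
    (σ : Splx r (n + 1)) : Splx r n :=
  ⟨σ.1 ∘ i.succAbove, fun _ _ hab => σ.2 _ _ (Fin.succAbove_lt_succAbove_iff.mpr hab)⟩

/-- The alternating-sum coboundary `ℓ^∞(X_n^⊥) → ℓ^∞(X_{n+1}^⊥)`. -/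
noncomputable def scoboundary {X : Type*} {r : X → X → Prop} {n : ℕ}
    (f : Splx r n → ℝ) : Splx r (n + 1) → ℝ :=
  fun σ => ∑ i : Fin (n + 2), (-1 : ℝ) ^ (i : ℕ) * f (Splx.face i σ)

section aux
open Filter Topology
variable {X : Type*} {r : X → X → Prop}

lemma cone_pairwise {n : ℕ} (x : X) (σ : Splx r n) (hx : ∀ i, r x (σ.1 i)) :
    PairwiseRel r (Fin.cons x σ.1 : Fin (n + 2) → X) := by
  intro i j hij
  induction j using Fin.cases with
  | zero => exact absurd hij (by simp)
  | succ b =>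
    induction i using Fin.cases with
    | zero => simpa using hx b
    | succ a =>
      simp only [Fin.cons_succ]
      exact σ.2 a b (by exact_mod_cast Fin.succ_lt_succ_iff.mp hij)

/-- The cone on a simplex with apex `x`. -/
def Splx.cone {n : ℕ} (x : X) (σ : Splx r n) (hx : ∀ i, r x (σ.1 i)) : Splx r (n + 1) :=
  ⟨Fin.cons x σ.1, cone_pairwise x σ hx⟩

lemma face_zero_cone {n : ℕ} (x : X) (σ : Splx r n) (hx : ∀ i, r x (σ.1 i)) :
    Splx.face 0 (Splx.cone x σ hx) = σ := by
  apply Subtype.ext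
  funext j
  simp [Splx.face, Splx.cone, Fin.zero_succAbove]

lemma face_succ_cone {n : ℕ} (x : X) (σ : Splx r (n + 1)) (hx : ∀ i, r x (σ.1 i))
    (k : Fin (n + 2)) :
    Splx.face k.succ (Splx.cone x σ hx) =
      Splx.cone x (Splx.face k σ) (fun i => hx (k.succAbove i)) := by
  apply Subtype.ext
  funext j
  induction j using Fin.cases with
  | zero => simp [Splx.face, Splx.cone, Fin.succ_succAbove_zero]
  | succ m => simp [Splx.face, Splx.cone, Fin.succ_succAbove_succ, Fin.removeNth]

/-- A point of `X` as a `0`-simplex. -/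
def Splx.pt (x : X) : Splx r 0 :=
  ⟨fun _ => x, fun i j hij => absurd hij (by fin_cases i <;> fin_cases j <;> simp)⟩

/-- An ultrafilter concentrated on common `r`-predecessors of every finite set. -/
lemma exists_ultrafilter_gen [Nonempty X] (r : X → X → Prop)
    (hgen : ∀ F : Finset X, ∃ x : X, ∀ y ∈ F, r x y) :
    ∃ U : Ultrafilter X, ∀ F : Finset X, {x | ∀ y ∈ F, r x y} ∈ U := by
  classical
  set f : Finset X → Filter X := fun F => Filter.principal {x | ∀ y ∈ F, r x y} with hf
  have hdir : Directed (· ≥ ·) f := by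
    intro s t
    refine ⟨s ∪ t, Filter.principal_mono.mpr ?_, Filter.principal_mono.mpr ?_⟩ <;>
    · intro x hx y hy
      exact hx y (by simp [hy])
  have hne : ∀ F, (f F).NeBot := fun F => by
    obtain ⟨x, hx⟩ := hgen F
    exact Filter.principal_neBot_iff.mpr ⟨x, hx⟩
  have hinf : (⨅ F, f F).NeBot := Filter.iInf_neBot_of_directed hdir hne
  refine ⟨Ultrafilter.of (⨅ F, f F), fun F => ?_⟩
  exact (Ultrafilter.of_le _) (Filter.mem_iInf_of_mem F (Filter.mem_principal_self _))

/-- Every bounded real function has a limit along an ultrafilter. -/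
lemma exists_ulim (U : Ultrafilter X) (g : X → ℝ) (C : ℝ)
    (hC : ∀ x, |g x| ≤ C) : ∃ a : ℝ, |a| ≤ C ∧ Filter.Tendsto g U (𝓝 a) := by
  have hcomp : IsCompact (Set.Icc (-C) C) := isCompact_Icc
  have hmem : Set.Icc (-C) C ∈ U.map g :=
    Filter.mem_map.mpr (Filter.univ_mem' fun x => abs_le.mp (hC x))
  obtain ⟨a, ha, hle⟩ := hcomp.ultrafilter_le_nhds (U.map g) (Filter.le_principal_iff.mpr hmem)
  exact ⟨a, abs_le.mpr ⟨ha.1, ha.2⟩, hle⟩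

end aux

open Filter Topology in
/-- for a generic relation `⊥` on a nonempty set `X`, the semi-simplicial set
`X_•^⊥` is connected and boundedly acyclic: the cohomology of the bounded cochain complex is
`ℝ` in degree `0` (every degree-0 cocycle is constant, and constants are cocycles) and
vanishes in all positive degrees. -/
theorem generic_splx_boundedly_acyclic {X : Type*} [Nonempty X] (r : X → X → Prop)
    (hgen : ∀ F : Finset X, ∃ x : X, ∀ y ∈ F, r x y) :
    -- H^0 ≅ ℝ
    ((∀ c : Splx r 0 → ℝ, IsBddFun c → scoboundary c = 0 → ∃ κ : ℝ, ∀ σ, c σ = κ) ∧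
      (∀ κ : ℝ, scoboundary (fun _ : Splx r 0 => κ) = 0)) ∧
    -- H^n = 0 for all n > 0
    (∀ (n : ℕ) (c : Splx r (n + 1) → ℝ), IsBddFun c → scoboundary c = 0 →
      ∃ b : Splx r n → ℝ, IsBddFun b ∧ scoboundary b = c) := by
  classical
  obtain ⟨U, hU⟩ := exists_ultrafilter_gen r hgen
  have hUs : ∀ {m : ℕ} (σ : Splx r m), {x | ∀ i, r x (σ.1 i)} ∈ U := by
    intro m σ
    refine Filter.mem_of_superset (hU (Finset.image σ.1 Finset.univ)) ?_
    intro x hx i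
    exact hx (σ.1 i) (Finset.mem_image_of_mem _ (Finset.mem_univ i))
  refine ⟨⟨?_, ?_⟩, ?_⟩
  · -- degree-0 cocycles are constant
    intro c _ hc
    obtain ⟨x0⟩ := ‹Nonempty X›
    have hedge : ∀ (z y : X), r z y → c (Splx.pt y) = c (Splx.pt z) := by
      intro z y hzy
      have hz : ∀ i, r z ((Splx.pt (r := r) y).1 i) := fun _ => hzy
      have h0 := congrFun hc (Splx.cone z (Splx.pt y) hz)
      have hface0 : Splx.face 0 (Splx.cone z (Splx.pt y) hz) = Splx.pt y :=
        face_zero_cone z (Splx.pt y) hz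
      have hface1 : Splx.face (Fin.succ 0) (Splx.cone z (Splx.pt y) hz) = Splx.pt z := by
        apply Subtype.ext
        funext j
        fin_cases j
        simp [Splx.face, Splx.cone, Splx.pt, Fin.succAbove]
      simp only [scoboundary, Pi.zero_apply, Fin.sum_univ_succ, Finset.univ_eq_empty,
        Finset.sum_empty, hface0, hface1, Fin.val_zero, pow_zero, one_mul, Fin.val_succ,
        pow_succ, add_zero] at h0
      linarith
    have hpt : ∀ σ : Splx r 0, σ = Splx.pt (σ.1 0) := by
      intro σ
      apply Subtype.ext
      funext j
      have : j = 0 := Fin.ext (by omega)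
      rw [this]
      rfl
    refine ⟨c (Splx.pt x0), fun σ => ?_⟩
    obtain ⟨z, hz⟩ := hgen {σ.1 0, x0}
    have h1 : c (Splx.pt (σ.1 0)) = c (Splx.pt z) := hedge z _ (hz _ (by simp))
    have h2 : c (Splx.pt x0) = c (Splx.pt z) := hedge z _ (hz _ (by simp))
    rw [hpt σ, h1, h2]
  · -- constants are cocycles
    intro κ
    funext σ
    simp [scoboundary, Fin.sum_univ_two]
  · -- positive degrees
    intro n c hbdd hc
    obtain ⟨C, hC⟩ := hbdd
    set C' : ℝ := max C 0 with hC'def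
    set gg : Splx r n → X → ℝ := fun σ x =>
      if h : ∀ i, r x (σ.1 i) then c (Splx.cone x σ h) else 0 with hgg
    have hgbdd : ∀ σ x, |gg σ x| ≤ C' := by
      intro σ x
      by_cases h : ∀ i, r x (σ.1 i)
      · simp only [hgg, dif_pos h]
        exact le_trans (hC _) (le_max_left _ _)
      · simp only [hgg, dif_neg h, abs_zero]
        exact le_max_right _ _
    have H : ∀ σ : Splx r n, ∃ a, |a| ≤ C' ∧ Filter.Tendsto (gg σ) (U : Filter X) (𝓝 a) :=
      fun σ => exists_ulim U (gg σ) C' (hgbdd σ)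
    choose b hb htend using H
    refine ⟨b, ⟨C', hb⟩, ?_⟩
    funext τ
    show (∑ i : Fin (n + 2), (-1 : ℝ) ^ (i : ℕ) * b (Splx.face i τ)) = c τ
    have h1 : Filter.Tendsto
        (fun x => ∑ i : Fin (n + 2), (-1 : ℝ) ^ (i : ℕ) * gg (Splx.face i τ) x)
        (U : Filter X)
        (𝓝 (∑ i : Fin (n + 2), (-1 : ℝ) ^ (i : ℕ) * b (Splx.face i τ))) :=
      tendsto_finset_sum _ fun i _ => (htend (Splx.face i τ)).const_mul _
    have h2 : ∀ x ∈ {x | ∀ i, r x (τ.1 i)},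
        (∑ i : Fin (n + 2), (-1 : ℝ) ^ (i : ℕ) * gg (Splx.face i τ) x) = c τ := by
      intro x hx
      have gface : ∀ i : Fin (n + 2),
          gg (Splx.face i τ) x = c (Splx.face i.succ (Splx.cone x τ hx)) := by
        intro i
        have h' : ∀ j, r x ((Splx.face i τ).1 j) := fun j => hx _
        rw [face_succ_cone x τ hx i]
        simp only [hgg]
        exact dif_pos h'
      have hcone := congrFun hc (Splx.cone x τ hx)
      simp only [scoboundary, Pi.zero_apply] at hcone
      rw [Fin.sum_univ_succ] at hcone
      simp only [Fin.val_zero, pow_zero, one_mul, face_zero_cone, Fin.val_succ,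
        pow_succ] at hcone
      have hS : ∑ i : Fin (n + 2),
          (-1 : ℝ) ^ (i : ℕ) * -1 * c (Splx.face i.succ (Splx.cone x τ hx)) =
          -∑ i : Fin (n + 2),
          (-1 : ℝ) ^ (i : ℕ) * c (Splx.face i.succ (Splx.cone x τ hx)) := by
        rw [← Finset.sum_neg_distrib]
        exact Finset.sum_congr rfl fun i _ => by ring
      rw [hS] at hcone
      simp only [gface]
      linarith
    have h3 : Filter.Tendsto
        (fun x => ∑ i : Fin (n + 2), (-1 : ℝ) ^ (i : ℕ) * gg (Splx.face i τ) x)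
        (U : Filter X) (𝓝 (c τ)) := by
      refine Filter.Tendsto.congr' ?_ tendsto_const_nhds
      exact Filter.eventuallyEq_of_mem (hUs τ) fun x hx => (h2 x hx).symm
    exact tendsto_nhds_unique h1 h3
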